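/- Let 0 ≤ ε ≤ 1/(2r) and let H be an r×r Hermitian positive definite matrix with Hᵀ·H = I and |H_{ij}| ≤ ε·(H_{ii} H_{jj})^{1/2} for i ≠ j. Then |H_{ii} - 1| ≤ 4r²ε for every i, and |H_{ij}| ≤ ε(1 + 4r²ε) for all i ≠ j. -/

import Mathlib

open scoped ComplexOrder

set_option maxHeartbeats 1000000 in
open Finset in
/-- Let `0 ≤ ε ≤ 1/(2r)` and `H` an `r × r` Hermitian positive definite matrix with
`Hᵀ·H = 1` and `|H_{ij}| ≤ ε·(H_{ii} H_{jj})^{1/2}` for `i ≠ j`.  Then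
`|H_{ii} - 1| ≤ 4r²ε` for every `i`, and `|H_{ij}| ≤ ε(1 + 4r²ε)` for all `i ≠ j`. -/
theorem stmt3 (r : ℕ) (hr : 0 < r) (ε : ℝ) (hε0 : 0 ≤ ε) (hε : ε ≤ 1 / (2 * r))
    (H : Matrix (Fin r) (Fin r) ℂ) (hpos : H.PosDef) (horth : H.transpose * H = 1)
    (hoff : ∀ i j : Fin r, i ≠ j →
      ‖H i j‖ ≤ ε * Real.sqrt ((H i i).re * (H j j).re)) :
    (∀ i, |(H i i).re - 1| ≤ 4 * r ^ 2 * ε) ∧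
    (∀ i j : Fin r, i ≠ j → ‖H i j‖ ≤ ε * (1 + 4 * r ^ 2 * ε)) := by
  have hr1 : (1:ℝ) ≤ r := by exact_mod_cast hr
  have hε' : ε ≤ 1 / (2 * r) := hε
  have hεhalf : ε ≤ 1/2 := le_trans hε (by rw [div_le_div_iff₀ (by positivity) (by norm_num)]; nlinarith)
  set d : Fin r → ℝ := fun i => (H i i).re with hd_def
  have hd : ∀ i, 0 < d i ∧ (H i i).im = 0 := by
    intro i
    have h := hpos.diag_pos (i := i)
    rw [Complex.lt_def] at h
    exact ⟨by simpa using h.1, by simpa using h.2.symm⟩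
  have hdpos : ∀ i, 0 < d i := fun i => (hd i).1
  have hsymm : ∀ i j, ‖H j i‖ = ‖H i j‖ := by
    intro i j
    have := hpos.isHermitian
    rw [Matrix.IsHermitian] at this
    have h2 : H j i = starRingEnd ℂ (H i j) := by
      conv_lhs => rw [← this]
      simp [Matrix.conjTranspose_apply]
    rw [h2, Complex.norm_conj]
  have habs2 : ∀ i j, i ≠ j → ‖H i j‖^2 ≤ ε^2 * (d i * d j) := by
    intro i j hij
    have h1 := hoff i j hij
    calc ‖H i j‖^2 ≤ (ε * Real.sqrt (d i * d j))^2 :=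
          pow_le_pow_left₀ (norm_nonneg _) h1 2
      _ = ε^2 * (d i * d j) := by
          rw [mul_pow, Real.sq_sqrt (mul_nonneg (hdpos i).le (hdpos j).le)]
  -- the key identity
  have hkey : ∀ i, d i ^ 2 + ∑ j ∈ univ.erase i, (H j i * H j i).re = 1 := by
    intro i
    have h := congrFun (congrFun horth i) i
    simp only [Matrix.mul_apply, Matrix.transpose_apply, Matrix.one_apply_eq] at h
    have h' : (∑ j, H j i * H j i).re = 1 := by rw [h]; simp
    rw [Complex.re_sum, ← Finset.add_sum_erase _ _ (Finset.mem_univ i)] at h'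
    have hdii : (H i i * H i i).re = d i ^ 2 := by
      rw [Complex.mul_re, (hd i).2]; ring
    rw [hdii] at h'
    exact h'
  set S : Fin r → ℝ := fun i => ∑ j ∈ univ.erase i, (H j i * H j i).re with hS_def
  set A : ℝ := ∑ j, d j with hA_def
  have hSbound : ∀ i, |S i| ≤ ε^2 * d i * A := by
    intro i
    calc |S i| ≤ ∑ j ∈ univ.erase i, |(H j i * H j i).re| := Finset.abs_sum_le_sum_abs _ _
      _ ≤ ∑ j ∈ univ.erase i, ε^2 * (d j * d i) := by
          apply Finset.sum_le_sum
          intro j hj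
          have hji : j ≠ i := Finset.ne_of_mem_erase hj
          calc |(H j i * H j i).re| ≤ ‖H j i * H j i‖ := Complex.abs_re_le_norm _
            _ = ‖H j i‖^2 := by rw [norm_mul]; ring
            _ ≤ ε^2 * (d j * d i) := habs2 j i hji
      _ ≤ ∑ j, ε^2 * (d j * d i) := by
          apply Finset.sum_le_sum_of_subset_of_nonneg (Finset.erase_subset _ _)
          intro j _ _
          exact mul_nonneg (sq_nonneg ε) (mul_nonneg (hdpos j).le (hdpos i).le)
      _ = ε^2 * d i * A := by rw [hA_def, Finset.mul_sum]; apply Finset.sum_congr rfl; intros; ring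
  -- max diagonal entry
  obtain ⟨i0, -, hmax⟩ := Finset.exists_max_image univ d ⟨⟨0, hr⟩, Finset.mem_univ _⟩
  set M : ℝ := d i0 with hM_def
  have hMi : ∀ i, d i ≤ M := fun i => hmax i (Finset.mem_univ i)
  have hMpos : 0 < M := hdpos i0
  have hAle : A ≤ r * M := by
    calc A ≤ ∑ _j : Fin r, M := Finset.sum_le_sum fun j _ => hMi j
      _ = r * M := by simp [mul_comm]
  have hε2r : ε^2 * r ≤ 1/4 := by
    have h2r : (0:ℝ) < 2 * r := by positivity
    have h1 : ε * (2 * r) ≤ 1 := by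
      have := (le_div_iff₀ h2r).mp hε'
      linarith
    nlinarith [mul_le_mul_of_nonneg_left h1 hε0, hεhalf, hε0]
  have hM2 : M ≤ 2 := by
    have h1 := hkey i0
    have h2 := hSbound i0
    have h3 : M^2 ≤ 1 + ε^2 * M * (r * M) := by
      have : M^2 = 1 - S i0 := by linarith [h1]
      have h4 : ε^2 * M * A ≤ ε^2 * M * (r * M) := by
        apply mul_le_mul_of_nonneg_left hAle (by positivity)
      have h5 := (abs_le.mp h2).1
      linarith
    nlinarith [mul_le_mul_of_nonneg_right hε2r (sq_nonneg M), sq_nonneg (M - 2), hMpos.le, h3]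
  -- part 1
  have part1 : ∀ i, |d i - 1| ≤ 4 * r * ε^2 := by
    intro i
    have h1 := hkey i
    have h2 := hSbound i
    have hdle : d i ≤ 2 := le_trans (hMi i) hM2
    have h3 : |S i| ≤ ε^2 * 2 * (r * 2) := by
      calc |S i| ≤ ε^2 * d i * A := h2
        _ ≤ ε^2 * 2 * (r * 2) := by
            have := hdpos i
            have hA0 : 0 ≤ A := Finset.sum_nonneg fun j _ => (hdpos j).le
            have hA2 : A ≤ r * 2 := le_trans hAle (by nlinarith)
            have hdA : d i * A ≤ 2 * (r * 2) := mul_le_mul hdle hA2 hA0 (by norm_num)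
            nlinarith [mul_le_mul_of_nonneg_left hdA (sq_nonneg ε)]
    have h4 : |d i ^ 2 - 1| ≤ 4 * r * ε^2 := by
      have : d i ^ 2 - 1 = -S i := by linarith
      rw [this, abs_neg]; linarith
    have h5 : |d i - 1| * (d i + 1) = |d i ^ 2 - 1| := by
      rw [← abs_of_pos (show (0:ℝ) < d i + 1 by linarith [hdpos i]), ← abs_mul]
      congr 1; ring
    have h6 : |d i - 1| ≤ |d i - 1| * (d i + 1) := by
      nlinarith [abs_nonneg (d i - 1), hdpos i]
    linarith
  have part1' : ∀ i, |d i - 1| ≤ 4 * r^2 * ε := by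
    intro i
    refine le_trans (part1 i) ?_
    have hεr : ε ≤ r := le_trans hεhalf (by linarith)
    nlinarith [mul_le_mul_of_nonneg_left hεr (show (0:ℝ) ≤ 4 * r * ε by positivity)]
  refine ⟨part1', fun i j hij => ?_⟩
  have hB : ∀ i, d i ≤ 1 + 4 * r^2 * ε := by
    intro i
    have := abs_le.mp (part1' i)
    linarith [this.2]
  have hB0 : (0:ℝ) ≤ 1 + 4 * r^2 * ε := by positivity
  calc ‖H i j‖ ≤ ε * Real.sqrt (d i * d j) := hoff i j hij
    _ ≤ ε * (1 + 4 * r^2 * ε) := by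
        apply mul_le_mul_of_nonneg_left _ hε0
        rw [show (1 + 4 * (r:ℝ)^2 * ε) = Real.sqrt ((1 + 4 * r^2 * ε)^2) by
          rw [Real.sqrt_sq hB0]]
        apply Real.sqrt_le_sqrt
        have h1 := hB i; have h2 := hB j
        nlinarith [hdpos i, hdpos j]
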